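/- Under the exact ideal-expectation setup for the six parity operators, the operators corresponding to adjacent edges anti-commute in their action on Ψ: for every adjacent pair (A_r, A_s) among (A₁₂,A₁₆), (A₁₂,A₂₃), (A₂₃,A₃₄), (A₃₄,A₄₅), (A₄₅,A₅₆), (A₅₆,A₁₆), one has A_r(A_s Ψ) + A_s(A_r Ψ) = 0. -/
import Mathlib


open scoped InnerProductSpace

private lemma invol_apply {H : Type*} [NormedAddCommGroup H] [InnerProductSpace ℂ H]
    {A : H →L[ℂ] H} (h : A ∘L A = 1) (x : H) : A (A x) = x := by
  have := congrArg (fun T : H →L[ℂ] H => T x) h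
  simpa using this

private lemma comm_apply {H : Type*} [NormedAddCommGroup H] [InnerProductSpace ℂ H]
    {A B : H →L[ℂ] H} (h : A ∘L B = B ∘L A) (x : H) : A (B x) = B (A x) := by
  have := congrArg (fun T : H →L[ℂ] H => T x) h
  simpa using this

/-- **Anti-commutativity on the state.** Under the exact ideal-expectation setup for the six
parity operators, the operators corresponding to adjacent edges anti-commute in their action
on `Ψ`. -/
theorem adjacent_parities_anticommute_on_state
    {H : Type*} [NormedAddCommGroup H] [InnerProductSpace ℂ H] [CompleteSpace H]
    (A₁₂ A₃₄ A₅₆ A₄₅ A₁₆ A₂₃ : H →L[ℂ] H)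
    -- Hermitian involutions
    (h₁₂ : IsSelfAdjoint A₁₂) (h₃₄ : IsSelfAdjoint A₃₄) (h₅₆ : IsSelfAdjoint A₅₆)
    (h₄₅ : IsSelfAdjoint A₄₅) (h₁₆ : IsSelfAdjoint A₁₆) (h₂₃ : IsSelfAdjoint A₂₃)
    (hi₁₂ : A₁₂ ∘L A₁₂ = 1) (hi₃₄ : A₃₄ ∘L A₃₄ = 1) (hi₅₆ : A₅₆ ∘L A₅₆ = 1)
    (hi₄₅ : A₄₅ ∘L A₄₅ = 1) (hi₁₆ : A₁₆ ∘L A₁₆ = 1) (hi₂₃ : A₂₃ ∘L A₂₃ = 1)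
    -- the nine same-row/same-column commutation relations
    (c₁ : A₁₂ ∘L A₃₄ = A₃₄ ∘L A₁₂) (c₂ : A₁₂ ∘L A₅₆ = A₅₆ ∘L A₁₂)
    (c₃ : A₃₄ ∘L A₅₆ = A₅₆ ∘L A₃₄) (c₄ : A₄₅ ∘L A₁₆ = A₁₆ ∘L A₄₅)
    (c₅ : A₄₅ ∘L A₂₃ = A₂₃ ∘L A₄₅) (c₆ : A₁₆ ∘L A₂₃ = A₂₃ ∘L A₁₆)
    (c₇ : A₁₂ ∘L A₄₅ = A₄₅ ∘L A₁₂) (c₈ : A₃₄ ∘L A₁₆ = A₁₆ ∘L A₃₄)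
    (c₉ : A₅₆ ∘L A₂₃ = A₂₃ ∘L A₅₆)
    -- the state and the exact ideal expectations
    (Ψ : H) (hΨ : ‖Ψ‖ = 1)
    (e₁ : A₁₂ (A₃₄ (A₅₆ Ψ)) = Ψ) (e₂ : A₄₅ (A₁₆ (A₂₃ Ψ)) = Ψ)
    (e₃ : A₁₂ (A₄₅ Ψ) = Ψ) (e₄ : A₃₄ (A₁₆ Ψ) = Ψ) (e₅ : A₅₆ (A₂₃ Ψ) = -Ψ) :
    A₁₂ (A₁₆ Ψ) + A₁₆ (A₁₂ Ψ) = 0 ∧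
    A₁₂ (A₂₃ Ψ) + A₂₃ (A₁₂ Ψ) = 0 ∧
    A₂₃ (A₃₄ Ψ) + A₃₄ (A₂₃ Ψ) = 0 ∧
    A₃₄ (A₄₅ Ψ) + A₄₅ (A₃₄ Ψ) = 0 ∧
    A₄₅ (A₅₆ Ψ) + A₅₆ (A₄₅ Ψ) = 0 ∧
    A₅₆ (A₁₆ Ψ) + A₁₆ (A₅₆ Ψ) = 0 := by
  -- basic single-operator facts
  have ha : A₄₅ Ψ = A₁₂ Ψ := by
    have := invol_apply hi₁₂ (A₄₅ Ψ); rw [e₃] at this; exact this.symm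
  have hb : A₁₆ Ψ = A₃₄ Ψ := by
    have := invol_apply hi₃₄ (A₁₆ Ψ); rw [e₄] at this; exact this.symm
  have hc : A₂₃ Ψ = -(A₅₆ Ψ) := by
    have := invol_apply hi₅₆ (A₂₃ Ψ); rw [e₅, map_neg] at this; exact this.symm
  -- from e₁
  have h1 : A₃₄ (A₁₂ Ψ) = A₅₆ Ψ := by
    have t1 := invol_apply hi₁₂ (A₃₄ (A₅₆ Ψ)); rw [e₁] at t1
    rw [t1, invol_apply hi₃₄]
  have h2 : A₁₂ (A₃₄ Ψ) = A₅₆ Ψ := by rw [comm_apply c₁]; exact h1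
  -- from e₂
  have h3 : A₁₆ (A₁₂ Ψ) = -(A₅₆ Ψ) := by
    have t1 := invol_apply hi₄₅ (A₁₆ (A₂₃ Ψ)); rw [e₂] at t1
    rw [← ha, t1, invol_apply hi₁₆, hc]
  have h4 : A₄₅ (A₃₄ Ψ) = -(A₅₆ Ψ) := by
    rw [← hb, comm_apply c₄, ha, h3]
  -- derived applications to A₅₆ Ψ
  have h5 : A₁₂ (A₅₆ Ψ) = A₃₄ Ψ := by
    have := congrArg A₁₂ h2; rw [invol_apply hi₁₂] at this; exact this.symm
  have h6 : A₃₄ (A₅₆ Ψ) = A₁₂ Ψ := by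
    have := congrArg A₃₄ h1; rw [invol_apply hi₃₄] at this; exact this.symm
  have h7 : A₁₆ (A₅₆ Ψ) = -(A₁₂ Ψ) := by
    have := congrArg A₁₆ h3; rw [invol_apply hi₁₆, map_neg] at this
    rw [this, neg_neg]
  have h8 : A₄₅ (A₅₆ Ψ) = -(A₃₄ Ψ) := by
    have := congrArg A₄₅ h4; rw [invol_apply hi₄₅, map_neg] at this
    rw [this, neg_neg]
  refine ⟨?_, ?_, ?_, ?_, ?_, ?_⟩
  · rw [hb, h2, h3]; abel
  · rw [hc, map_neg, h5, ← ha, ← comm_apply c₅, hc, map_neg, h8]; abel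
  · rw [← hb, ← comm_apply c₆, hc, map_neg, map_neg, h7, h6]; abel
  · rw [ha, h1, h4]; abel
  · rw [h8, ha, ← comm_apply c₂, h5]; abel
  · rw [hb, ← comm_apply c₃, h6, h7]; abel
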